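/- Let n ≥ 2, c > 0, and let L_u be the n×n Laplacian of the uniformly weighted line graph. For every integer k with 1 ≤ k ≤ n, the vector u_k ∈ ℝⁿ with entries u_k(j) = cos((2j−1)(2k−1)π/(4n)) for j = 1, …, n satisfies (L_u + 2c·e_ne_nᵀ) u_k = 2c(1 − cos((2k−1)π/(2n))) u_k. Hence the DCT-4 basis vectors are eigenvectors of the generalized graph Laplacian of the line graph with a self-loop of weight 2c at the last vertex. -/

import Mathlib

open Matrix Real

/-- The combinatorial Laplacian of the uniformly weighted line graph on `n` vertices with
edge weight `c`. -/
def lineLaplacian (n : ℕ) (c : ℝ) : Matrix (Fin n) (Fin n) ℝ :=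
  Matrix.of fun i j =>
    if i = j then (if i.val = 0 ∨ i.val = n - 1 then c else 2 * c)
    else if i.val + 1 = j.val ∨ j.val + 1 = i.val then -c else 0

lemma sum_two' {n : ℕ} {a b : Fin n} (hab : a ≠ b) (f g : Fin n → ℝ) :
    ∑ j, (if j = a then f j else if j = b then g j else 0) = f a + g b := by
  have h : ∀ j : Fin n, (if j = a then f j else if j = b then g j else 0)
      = (if j = a then f j else 0) + (if j = b then g j else 0) := by
    intro j
    split_ifs with h1 h2 h2 <;> simp_all
  simp [h, Finset.sum_add_distrib, Finset.sum_ite_eq']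

lemma sum_three' {n : ℕ} {a b c : Fin n} (hab : a ≠ b) (hac : a ≠ c) (hbc : b ≠ c)
    (f g h : Fin n → ℝ) :
    ∑ j, (if j = a then f j else if j = b then g j else if j = c then h j else 0)
      = f a + g b + h c := by
  have he : ∀ j : Fin n, (if j = a then f j else if j = b then g j else if j = c then h j else 0)
      = (if j = a then f j else 0) + (if j = b then g j else 0) + (if j = c then h j else 0) := by
    intro j
    split_ifs <;> simp_all
  simp [he, Finset.sum_add_distrib, Finset.sum_ite_eq']

lemma trig_case0 (c t : ℝ) :
    c * Real.cos t + -c * Real.cos (3 * t) = 2 * c * (1 - Real.cos (2 * t)) * Real.cos t := by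
  rw [show (3 : ℝ) * t = 2 * t + t by ring, Real.cos_add, Real.cos_two_mul, Real.sin_two_mul]
  linear_combination (2 * c * Real.cos t) * Real.sin_sq_add_cos_sq t

lemma trig_mid (c d x : ℝ) :
    -c * Real.cos (x - d) + 2 * c * Real.cos x + -c * Real.cos (x + d)
      = 2 * c * (1 - Real.cos d) * Real.cos x := by
  rw [Real.cos_sub, Real.cos_add]; ring

lemma trig_end (c t a : ℝ) (ha : Real.cos a = 0) :
    -c * Real.cos (a - 3 * t) + 3 * c * Real.cos (a - t)
      = 2 * c * (1 - Real.cos (2 * t)) * Real.cos (a - t) := by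
  rw [Real.cos_sub, Real.cos_sub, ha, show (3 : ℝ) * t = 2 * t + t by ring,
    Real.sin_add, Real.cos_two_mul, Real.sin_two_mul]
  ring

/-- DCT-4 basis vectors are eigenvectors of the line graph Laplacian with a self-loop of weight `2c` at the last vertex. For `1 ≤ k ≤ n` the given vector is an eigenvector
with the stated eigenvalue. -/
theorem dct4_eigenvectors (n : ℕ) (hn : 2 ≤ n) (c : ℝ) (hc : 0 < c)
    (k : ℕ) (hk1 : 1 ≤ k) (hk2 : k ≤ n) :
    (lineLaplacian n c + Matrix.single (⟨n - 1, by omega⟩ : Fin n) ⟨n - 1, by omega⟩ (2 * c)) *ᵥ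
        (fun j : Fin n => Real.cos ((2 * (j : ℝ) + 1) * (2 * (k : ℝ) - 1) * Real.pi / (4 * n))) =
      (2 * c * (1 - Real.cos ((2 * (k : ℝ) - 1) * Real.pi / (2 * n)))) •
        (fun j : Fin n => Real.cos ((2 * (j : ℝ) + 1) * (2 * (k : ℝ) - 1) * Real.pi / (4 * n))) := by
  have hn0 : (n : ℝ) ≠ 0 := Nat.cast_ne_zero.mpr (by omega)
  set u : Fin n → ℝ :=
    fun j : Fin n => Real.cos ((2 * (j : ℝ) + 1) * (2 * (k : ℝ) - 1) * Real.pi / (4 * n)) with hu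
  funext i
  simp only [Matrix.mulVec, dotProduct, Pi.smul_apply, smul_eq_mul]
  by_cases hi0 : i.val = 0
  · -- first row
    have hrow : ∀ j : Fin n,
        (lineLaplacian n c + Matrix.single (⟨n - 1, by omega⟩ : Fin n) (⟨n - 1, by omega⟩ : Fin n) (2 * c)) i j * u j
        = if j = (⟨0, by omega⟩ : Fin n) then c * u j
          else if j = (⟨1, by omega⟩ : Fin n) then -c * u j else 0 := by
      intro j
      simp only [Matrix.add_apply, lineLaplacian, Matrix.single, Matrix.of_apply,
        Fin.ext_iff]
      split_ifs <;> first | ring1 | (exfalso; omega)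
    rw [Finset.sum_congr rfl fun j _ => hrow j,
      sum_two' (by simp [Fin.ext_iff]) (fun j => c * u j) (fun j => -c * u j)]
    have hiv : (i : ℝ) = 0 := by exact_mod_cast congrArg Nat.cast hi0
    simp only [hu, Fin.val_mk, hiv, Nat.cast_zero, Nat.cast_one]
    rw [show (2 * (0 : ℝ) + 1) * (2 * (k : ℝ) - 1) * Real.pi / (4 * n)
        = (2 * (k : ℝ) - 1) * Real.pi / (4 * n) by ring,
      show (2 * (1 : ℝ) + 1) * (2 * (k : ℝ) - 1) * Real.pi / (4 * n)
        = 3 * ((2 * (k : ℝ) - 1) * Real.pi / (4 * n)) by ring,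
      show (2 * (k : ℝ) - 1) * Real.pi / (2 * n)
        = 2 * ((2 * (k : ℝ) - 1) * Real.pi / (4 * n)) by field_simp; ring]
    exact trig_case0 c _
  · by_cases hiN : i.val = n - 1
    · -- last row
      have hrow : ∀ j : Fin n,
          (lineLaplacian n c + Matrix.single (⟨n - 1, by omega⟩ : Fin n) (⟨n - 1, by omega⟩ : Fin n) (2 * c)) i j * u j
          = if j = (⟨n - 2, by omega⟩ : Fin n) then -c * u j
            else if j = i then 3 * c * u j else 0 := by
        intro j
        simp only [Matrix.add_apply, lineLaplacian, Matrix.single, Matrix.of_apply,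
          Fin.ext_iff]
        split_ifs <;> first | ring1 | (exfalso; omega)
      rw [Finset.sum_congr rfl fun j _ => hrow j,
        sum_two' (by simp [Fin.ext_iff]; try omega) (fun j => -c * u j) (fun j => 3 * c * u j)]
      have hiv : (i : ℝ) = (n : ℝ) - 1 := by
        rw [show (i : ℕ) = n - 1 from hiN]
        push_cast [Nat.cast_sub (by omega : 1 ≤ n)]
        ring
      have hm2 : ((n - 2 : ℕ) : ℝ) = (n : ℝ) - 2 := by
        push_cast [Nat.cast_sub (by omega : 2 ≤ n)]
        ring
      have ha : Real.cos ((2 * (k : ℝ) - 1) * Real.pi / 2) = 0 := by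
        rw [show (2 * (k : ℝ) - 1) * Real.pi / 2 = (k : ℝ) * Real.pi - Real.pi / 2 by ring,
          Real.cos_sub, Real.cos_pi_div_two, Real.sin_pi_div_two, Real.sin_nat_mul_pi]
        ring
      simp only [hu, Fin.val_mk, hiv, hm2]
      rw [show (2 * ((n : ℝ) - 2) + 1) * (2 * (k : ℝ) - 1) * Real.pi / (4 * n)
          = (2 * (k : ℝ) - 1) * Real.pi / 2 - 3 * ((2 * (k : ℝ) - 1) * Real.pi / (4 * n)) by
            field_simp; ring,
        show (2 * ((n : ℝ) - 1) + 1) * (2 * (k : ℝ) - 1) * Real.pi / (4 * n)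
          = (2 * (k : ℝ) - 1) * Real.pi / 2 - (2 * (k : ℝ) - 1) * Real.pi / (4 * n) by
            field_simp; ring,
        show (2 * (k : ℝ) - 1) * Real.pi / (2 * n)
          = 2 * ((2 * (k : ℝ) - 1) * Real.pi / (4 * n)) by field_simp; ring]
      exact trig_end c _ _ ha
    · -- interior row
      have hm1 : 1 ≤ i.val := by omega
      have hm2 : i.val ≤ n - 2 := by omega
      have hrow : ∀ j : Fin n,
          (lineLaplacian n c + Matrix.single (⟨n - 1, by omega⟩ : Fin n) (⟨n - 1, by omega⟩ : Fin n) (2 * c)) i j * u j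
          = if j = (⟨i.val - 1, by omega⟩ : Fin n) then -c * u j
            else if j = i then 2 * c * u j
            else if j = (⟨i.val + 1, by omega⟩ : Fin n) then -c * u j else 0 := by
        intro j
        simp only [Matrix.add_apply, lineLaplacian, Matrix.single, Matrix.of_apply,
          Fin.ext_iff]
        split_ifs <;> first | ring1 | (exfalso; omega)
      rw [Finset.sum_congr rfl fun j _ => hrow j,
        sum_three' (by simp [Fin.ext_iff]; try omega) (by simp [Fin.ext_iff]; try omega)
          (by simp [Fin.ext_iff]; try omega)
          (fun j => -c * u j) (fun j => 2 * c * u j) (fun j => -c * u j)]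
      have hc1 : ((i.val - 1 : ℕ) : ℝ) = (i : ℝ) - 1 := by
        push_cast [Nat.cast_sub hm1]
        ring
      have hc2 : ((i.val + 1 : ℕ) : ℝ) = (i : ℝ) + 1 := by push_cast; ring
      simp only [hu, Fin.val_mk, hc1, hc2]
      rw [show (2 * ((i : ℝ) - 1) + 1) * (2 * (k : ℝ) - 1) * Real.pi / (4 * n)
          = (2 * (i : ℝ) + 1) * (2 * (k : ℝ) - 1) * Real.pi / (4 * n)
            - (2 * (k : ℝ) - 1) * Real.pi / (2 * n) by field_simp; ring,
        show (2 * ((i : ℝ) + 1) + 1) * (2 * (k : ℝ) - 1) * Real.pi / (4 * n)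
          = (2 * (i : ℝ) + 1) * (2 * (k : ℝ) - 1) * Real.pi / (4 * n)
            + (2 * (k : ℝ) - 1) * Real.pi / (2 * n) by field_simp; ring]
      exact trig_mid c _ _
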